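/- arXiv:2509.02393 — 2 statements merged into one kernel-verified Lean document; each statement's English description precedes it below -/
import Mathlib

section
/- Let M = (P, a) be a substochastic DTMC on finite S and S₁ ⊊ S. Define 𝒪 := {t ∈ S∖S₁ | P(S₁ t) > 0}, 𝒰 := {r ∈ S₁ | P(r S₁* 𝒪) > 0}, and 𝒰₁ := {r ∈ S₁ | P(r𝒪) > 0}. Assume 𝒰 and 𝒪 are nonempty. Then the matrix 1 − P₂(𝒰) (identity minus the 𝒰×𝒰 submatrix of the transition matrix) is invertible, and its inverse is Σ_{i=0}^∞ P₂(𝒰)^i; equivalently, the spectral radius of P₂(𝒰) is strictly less than 1. -/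
open scoped ENNReal

namespace PA

variable {α : Type*}

/-- Block contraction auxiliary: `prev` records whether the previous letter was in `K`
(i.e., we are inside a `K`-block whose first letter was already kept). -/
def contractAux [DecidableEq α] (K : Finset α) : Bool → List α → List α
  | _, [] => []
  | prev, a :: x =>
    if a ∈ K then
      (if prev then contractAux K true x else a :: contractAux K true x)
    else a :: contractAux K false x

/-- `contract K x` is `x − K`: every maximal nonempty factor of `x` consisting of
letters of `K` is replaced by its first letter. -/
def contract [DecidableEq α] (K : Finset α) (x : List α) : List α :=
  contractAux K false x

/-- `preim K x` is `x + K`, the preimage of `x` under `contract K`. -/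
def preim [DecidableEq α] (K : Finset α) (x : List α) : Set (List α) :=
  {x' | contract K x' = x}

/-- `minPref L` is `L^≤`: the prefix-minimal elements of `L`. -/
def minPref (L : Set (List α)) : Set (List α) :=
  {x ∈ L | ∀ x', x' <+: x → x' ≠ x → x' ∉ L}

/-- Fusion concatenation: for `u` ending in `a` and `v` starting with `a`,
`fuse u v` is `u ++ v` with one copy of the shared letter removed. -/
def fuse (u v : List α) : List α := u ++ v.tail

/-- Elementwise fusion of sets of words. -/
def setFuse (X Y : Set (List α)) : Set (List α) :=
  {z | ∃ u ∈ X, ∃ v ∈ Y, z = fuse u v}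

/-- Probability mass of a set of words: sum of `P` over the prefix-minimal elements. -/
noncomputable def setP (P : List α → ℝ≥0∞) (R : Set (List α)) : ℝ≥0∞ :=
  ∑' x : minPref R, P x.1

/-- `P ∈ 𝒯(S)`: substochastic transition probability function on `S⁺`. -/
def IsTPF [Fintype α] (P : List α → ℝ≥0∞) : Prop :=
  (∀ x, P x ≤ 1) ∧ (∀ s : α, P [s] = 1) ∧
  (∀ s : α, (∑ t : α, P [s, t]) ≤ 1) ∧
  (∀ (x y : List α) (s : α), P (x ++ s :: y) = P (x ++ [s]) * P (s :: y))

/-- `(K)₀^M`: the interior of `K` in the DTMC `(P, a)`: states of `K` other than `a`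
with no incoming transition from outside `K`. -/
def interior [Fintype α] [DecidableEq α] (P : List α → ℝ≥0∞) (a : α) (K : Finset α) :
    Set α :=
  {s | s ∈ K ∧ s ≠ a ∧ (∑ t ∈ Kᶜ, P [t, s]) = 0}

open Classical in
noncomputable def abstr [Fintype α] [DecidableEq α]
    (P : List α → ℝ≥0∞) (a : α) (K : Finset α) : List α → ℝ≥0∞ :=
  fun x =>
    if x.length = 1 then 1
    else if 2 ≤ x.length ∧ ∃ s ∈ x, s ∈ interior P a K then 0
    else setP P (preim K x)

open Classical in
noncomputable def OutSet [Fintype α] (P : List α → ℝ≥0∞) (S₁ : Finset α) : Finset α :=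
  Finset.univ.filter fun t => t ∉ S₁ ∧ 0 < ∑ s ∈ S₁, P [s, t]

open Classical in
noncomputable def USet [Fintype α] (P : List α → ℝ≥0∞) (S₁ : Finset α) : Finset α :=
  Finset.univ.filter fun r => r ∈ S₁ ∧
    0 < setP P {x | ∃ (w : List α) (t : α),
      x = r :: (w ++ [t]) ∧ (∀ c ∈ w, c ∈ S₁) ∧ t ∈ OutSet P S₁}

open Classical in
noncomputable def U1Set [Fintype α] (P : List α → ℝ≥0∞) (S₁ : Finset α) : Finset α :=
  Finset.univ.filter fun r => r ∈ S₁ ∧ 0 < ∑ t ∈ OutSet P S₁, P [r, t]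

end PA

set_option maxHeartbeats 1000000

namespace PAex

open Filter Topology PA

section MatrixAux

variable {n : Type*} [Fintype n] [DecidableEq n]

lemma pow_entry_nonneg (A : Matrix n n ℝ) (h0 : ∀ i j, 0 ≤ A i j) :
    ∀ k i j, 0 ≤ (A ^ k) i j := by
  intro k
  induction k with
  | zero =>
    intro i j
    rw [pow_zero, Matrix.one_apply]
    split <;> norm_num
  | succ k ih =>
    intro i j
    rw [pow_succ, Matrix.mul_apply]
    exact Finset.sum_nonneg fun w _ => mul_nonneg (ih i w) (h0 w j)

lemma rowsum_expand (A : Matrix n n ℝ) (k : ℕ) (i : n) :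
    ∑ j, (A ^ (k + 1)) i j = ∑ w, (A ^ k) i w * ∑ j, A w j := by
  simp only [pow_succ, Matrix.mul_apply, Finset.mul_sum]
  exact Finset.sum_comm

lemma rowsum_expand' (A : Matrix n n ℝ) (k : ℕ) (i : n) :
    ∑ j, (A ^ (k + 1)) i j = ∑ w, A i w * ∑ j, (A ^ k) w j := by
  simp only [pow_succ', Matrix.mul_apply, Finset.mul_sum]
  exact Finset.sum_comm

lemma rowsum_pow_le_one (A : Matrix n n ℝ) (h0 : ∀ i j, 0 ≤ A i j)
    (hrow : ∀ i, ∑ j, A i j ≤ 1) : ∀ k i, ∑ j, (A ^ k) i j ≤ 1 := by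
  intro k
  induction k with
  | zero => intro i; simp [Matrix.one_apply]
  | succ k ih =>
    intro i
    rw [rowsum_expand]
    calc ∑ w, (A ^ k) i w * ∑ j, A w j ≤ ∑ w, (A ^ k) i w * 1 :=
          Finset.sum_le_sum fun w _ =>
            mul_le_mul_of_nonneg_left (hrow w) (pow_entry_nonneg A h0 k i w)
      _ = ∑ w, (A ^ k) i w := by simp
      _ ≤ 1 := ih i

lemma rowsum_pow_antitone (A : Matrix n n ℝ) (h0 : ∀ i j, 0 ≤ A i j)
    (hrow : ∀ i, ∑ j, A i j ≤ 1) {k m : ℕ} (hkm : k ≤ m) (i : n) :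
    ∑ j, (A ^ m) i j ≤ ∑ j, (A ^ k) i j := by
  induction m with
  | zero => simp_all
  | succ m ih =>
    rcases Nat.lt_or_ge k (m + 1) with h | h
    · have h' : k ≤ m := Nat.lt_succ_iff.mp h
      refine le_trans ?_ (ih h')
      rw [rowsum_expand]
      calc ∑ w, (A ^ m) i w * ∑ j, A w j ≤ ∑ w, (A ^ m) i w * 1 :=
            Finset.sum_le_sum fun w _ =>
              mul_le_mul_of_nonneg_left (hrow w) (pow_entry_nonneg A h0 m i w)
        _ = ∑ w, (A ^ m) i w := by simp
    · have : k = m + 1 := le_antisymm hkm h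
      simp [this]

lemma rowsum_step (A : Matrix n n ℝ) (h0 : ∀ i j, 0 ≤ A i j)
    (hrow : ∀ i, ∑ j, A i j ≤ 1) {k : ℕ} {u v₀ : n}
    (hv : ∑ j, (A ^ k) v₀ j < 1) (hA : 0 < A u v₀) :
    ∑ j, (A ^ (k + 1)) u j < 1 := by
  rw [rowsum_expand']
  have hlt : ∑ w, A u w * ∑ j, (A ^ k) w j < ∑ w, A u w := by
    refine Finset.sum_lt_sum (fun w _ => mul_le_of_le_one_right (h0 u w)
      (rowsum_pow_le_one A h0 hrow k w)) ⟨v₀, Finset.mem_univ _, ?_⟩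
    calc A u v₀ * ∑ j, (A ^ k) v₀ j < A u v₀ * 1 := mul_lt_mul_of_pos_left hv hA
      _ = A u v₀ := mul_one _
  exact hlt.trans_le (hrow u)

lemma summable_pow_entry [Nonempty n] (A : Matrix n n ℝ) (h0 : ∀ i j, 0 ≤ A i j)
    (hrow : ∀ i, ∑ j, A i j ≤ 1) (hexit : ∀ i, ∃ k, ∑ j, (A ^ k) i j < 1)
    (i j : n) : Summable fun m => (A ^ m) i j := by
  classical
  set N : ℕ := Finset.univ.sup fun i => (hexit i).choose with hNdef
  have hN : ∀ i, ∑ j, (A ^ N) i j < 1 := fun i =>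
    lt_of_le_of_lt (rowsum_pow_antitone A h0 hrow
      (Finset.le_sup (f := fun i => (hexit i).choose) (Finset.mem_univ i)) i)
      (hexit i).choose_spec
  set c : ℝ := Finset.univ.sup' Finset.univ_nonempty (fun i => ∑ j, (A ^ N) i j) with hcdef
  have hc1 : c < 1 := (Finset.sup'_lt_iff _).2 fun i _ => hN i
  obtain ⟨i₀⟩ := ‹Nonempty n›
  have hc0 : 0 ≤ c := le_trans
    (Finset.sum_nonneg fun j _ => pow_entry_nonneg A h0 N i₀ j)
    (Finset.le_sup' (f := fun i => ∑ j, (A ^ N) i j) (Finset.mem_univ i₀))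
  have hNpos : 0 < N := by
    rcases Nat.eq_zero_or_pos N with h | h
    · exfalso
      have := hN i₀
      rw [h] at this
      simp [Matrix.one_apply] at this
    · exact h
  have hcle : ∀ w, ∑ j, (A ^ N) w j ≤ c := fun w =>
    Finset.le_sup' (f := fun i => ∑ j, (A ^ N) i j) (Finset.mem_univ w)
  have hdecay : ∀ q i, ∑ j, (A ^ (N * q)) i j ≤ c ^ q := by
    intro q
    induction q with
    | zero => intro i; simp [Matrix.one_apply]
    | succ q ih =>
      intro i
      have hEq : N * (q + 1) = N * q + N := by ring
      have expand : ∑ j, (A ^ (N * q + N)) i j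
          = ∑ w, (A ^ (N * q)) i w * ∑ j, (A ^ N) w j := by
        rw [pow_add]
        simp only [Matrix.mul_apply, Finset.mul_sum]
        exact Finset.sum_comm
      rw [hEq, expand]
      calc ∑ w, (A ^ (N * q)) i w * ∑ j, (A ^ N) w j
          ≤ ∑ w, (A ^ (N * q)) i w * c :=
            Finset.sum_le_sum fun w _ =>
              mul_le_mul_of_nonneg_left (hcle w) (pow_entry_nonneg A h0 _ i w)
        _ = (∑ w, (A ^ (N * q)) i w) * c := by rw [Finset.sum_mul]
        _ ≤ c ^ q * c := mul_le_mul_of_nonneg_right (ih i) hc0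
        _ = c ^ (q + 1) := (pow_succ c q).symm
  have hent : ∀ m, (A ^ m) i j ≤ c ^ (m / N) := by
    intro m
    calc (A ^ m) i j ≤ ∑ j', (A ^ m) i j' :=
          Finset.single_le_sum (fun j' _ => pow_entry_nonneg A h0 m i j') (Finset.mem_univ j)
      _ ≤ ∑ j', (A ^ (N * (m / N))) i j' :=
          rowsum_pow_antitone A h0 hrow (by
            rw [Nat.mul_comm]
            exact Nat.div_mul_le_self m N) i
      _ ≤ c ^ (m / N) := hdecay _ i
  have hgeo : ∀ M : ℕ, ∑ q ∈ Finset.range M, c ^ q ≤ (1 - c)⁻¹ := fun M =>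
    Summable.sum_le_tsum (Finset.range M) (fun q _ => pow_nonneg hc0 q)
      (summable_geometric_of_lt_one hc0 hc1) |>.trans_eq
      (tsum_geometric_of_lt_one hc0 hc1)
  have hpart : ∀ M : ℕ, ∑ m ∈ Finset.range M, c ^ (m / N) ≤ N * (1 - c)⁻¹ := by
    intro M
    rw [Finset.sum_comp (fun q => c ^ q) (fun m => m / N)]
    have hcard : ∀ q, ((Finset.range M).filter (fun m => m / N = q)).card ≤ N := by
      intro q
      have hsub : (Finset.range M).filter (fun m => m / N = q) ⊆
          Finset.Ico (q * N) (q * N + N) := by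
        intro m hm
        simp only [Finset.mem_filter, Finset.mem_range] at hm
        have hd := Nat.div_add_mod m N
        have hmod : m % N < N := Nat.mod_lt m hNpos
        have h1 : N * q + m % N = m := by rw [← hm.2]; exact hd
        rw [Finset.mem_Ico]
        constructor
        · rw [← hm.2]; exact Nat.div_mul_le_self m N
        · calc m = N * q + m % N := h1.symm
            _ < N * q + N := Nat.add_lt_add_left hmod _
            _ = q * N + N := by rw [Nat.mul_comm]
      calc ((Finset.range M).filter (fun m => m / N = q)).card
          ≤ (Finset.Ico (q * N) (q * N + N)).card := Finset.card_le_card hsub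
        _ = N := by rw [Nat.card_Ico]; omega
    have himg : (Finset.range M).image (fun m => m / N) ⊆ Finset.range M := by
      intro q hq
      obtain ⟨m, hm, rfl⟩ := Finset.mem_image.mp hq
      rw [Finset.mem_range] at hm ⊢
      exact lt_of_le_of_lt (Nat.div_le_self m N) hm
    calc ∑ q ∈ (Finset.range M).image (fun m => m / N),
          ((Finset.range M).filter (fun m => m / N = q)).card • c ^ q
        ≤ ∑ q ∈ (Finset.range M).image (fun m => m / N), (N : ℝ) * c ^ q := by
          refine Finset.sum_le_sum fun q _ => ?_
          rw [nsmul_eq_mul]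
          exact mul_le_mul_of_nonneg_right (by exact_mod_cast hcard q) (pow_nonneg hc0 q)
      _ ≤ ∑ q ∈ Finset.range M, (N : ℝ) * c ^ q :=
          Finset.sum_le_sum_of_subset_of_nonneg himg fun q _ _ =>
            mul_nonneg (Nat.cast_nonneg N) (pow_nonneg hc0 q)
      _ = (N : ℝ) * ∑ q ∈ Finset.range M, c ^ q := (Finset.mul_sum _ _ _).symm
      _ ≤ N * (1 - c)⁻¹ := mul_le_mul_of_nonneg_left (hgeo M) (Nat.cast_nonneg N)
  exact summable_of_sum_range_le (fun m => pow_entry_nonneg A h0 m i j)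
    (fun M => le_trans (Finset.sum_le_sum fun m _ => hent m) (hpart M))

lemma neumann [Nonempty n] (A : Matrix n n ℝ) (h0 : ∀ i j, 0 ≤ A i j)
    (hrow : ∀ i, ∑ j, A i j ≤ 1) (hexit : ∀ i, ∃ k, ∑ j, (A ^ k) i j < 1) :
    IsUnit (1 - A) ∧ HasSum (fun m : ℕ => A ^ m) (1 - A)⁻¹ := by
  have hS : ∀ i j, Summable fun m => (A ^ m) i j := summable_pow_entry A h0 hrow hexit
  set B : Matrix n n ℝ := Matrix.of fun i j => ∑' m, (A ^ m) i j with hB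
  have hhs : HasSum (fun m : ℕ => A ^ m) B := by
    apply Pi.hasSum.mpr
    intro i
    apply Pi.hasSum.mpr
    intro j
    exact (hS i j).hasSum
  have htel : ∀ i j, ∑' m, ((A ^ m) i j - (A ^ (m + 1)) i j) = (1 : Matrix n n ℝ) i j := by
    intro i j
    have hS' : Summable fun m => (A ^ (m + 1)) i j :=
      (summable_nat_add_iff (f := fun m => (A ^ m) i j) 1).2 (hS i j)
    have hsub : Summable fun m => (A ^ m) i j - (A ^ (m + 1)) i j := (hS i j).sub hS'
    have h1 := hsub.hasSum.tendsto_sum_nat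
    have h2 : (fun M => ∑ m ∈ Finset.range M, ((A ^ m) i j - (A ^ (m + 1)) i j))
        = fun M => (A ^ 0) i j - (A ^ M) i j :=
      funext fun M => Finset.sum_range_sub' (fun m => (A ^ m) i j) M
    rw [h2] at h1
    have h3 : Tendsto (fun M => (A ^ 0) i j - (A ^ M) i j) atTop (𝓝 ((A ^ 0) i j - 0)) :=
      tendsto_const_nhds.sub (hS i j).tendsto_atTop_zero
    have h4 := tendsto_nhds_unique h1 h3
    rw [h4]
    simp [Matrix.one_apply]
  have hmul_left : (1 - A) * B = 1 := by
    ext i j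
    rw [Matrix.mul_apply]
    calc ∑ w, (1 - A) i w * B w j
        = ∑ w, ∑' m, (1 - A) i w * (A ^ m) w j := by
          refine Finset.sum_congr rfl fun w _ => ?_
          exact (tsum_mul_left).symm
      _ = ∑' m, ∑ w, (1 - A) i w * (A ^ m) w j :=
          (Summable.tsum_finsetSum fun w _ => (hS w j).mul_left _).symm
      _ = ∑' m, ((A ^ m) i j - (A ^ (m + 1)) i j) := by
          refine tsum_congr fun m => ?_
          have hmm : (1 - A) * (A ^ m) = A ^ m - A ^ (m + 1) := by
            rw [sub_mul, one_mul, pow_succ']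
          calc ∑ w, (1 - A) i w * (A ^ m) w j = ((1 - A) * (A ^ m)) i j :=
                (Matrix.mul_apply).symm
            _ = (A ^ m - A ^ (m + 1)) i j := by rw [hmm]
            _ = (A ^ m) i j - (A ^ (m + 1)) i j := Matrix.sub_apply _ _ _ _
      _ = (1 : Matrix n n ℝ) i j := htel i j
  have hmul_right : B * (1 - A) = 1 := by
    ext i j
    rw [Matrix.mul_apply]
    calc ∑ w, B i w * (1 - A) w j
        = ∑ w, ∑' m, (A ^ m) i w * (1 - A) w j := by
          refine Finset.sum_congr rfl fun w _ => ?_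
          exact (tsum_mul_right).symm
      _ = ∑' m, ∑ w, (A ^ m) i w * (1 - A) w j :=
          (Summable.tsum_finsetSum fun w _ => (hS i w).mul_right _).symm
      _ = ∑' m, ((A ^ m) i j - (A ^ (m + 1)) i j) := by
          refine tsum_congr fun m => ?_
          have hmm : (A ^ m) * (1 - A) = A ^ m - A ^ (m + 1) := by
            rw [mul_sub, mul_one, pow_succ]
          calc ∑ w, (A ^ m) i w * (1 - A) w j = ((A ^ m) * (1 - A)) i j :=
                (Matrix.mul_apply).symm
            _ = (A ^ m - A ^ (m + 1)) i j := by rw [hmm]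
            _ = (A ^ m) i j - (A ^ (m + 1)) i j := Matrix.sub_apply _ _ _ _
      _ = (1 : Matrix n n ℝ) i j := htel i j
  have hunit : IsUnit (1 - A) := ⟨⟨1 - A, B, hmul_left, hmul_right⟩, rfl⟩
  have hinv : (1 - A)⁻¹ = B := Matrix.inv_eq_right_inv hmul_left
  exact ⟨hunit, hinv ▸ hhs⟩

end MatrixAux

section ProbAux

variable {α : Type*} {P : List α → ℝ≥0∞}

lemma prefix_pos (hr : ∀ (x y : List α) (s : α), P (x ++ s :: y) = P (x ++ [s]) * P (s :: y))
    {x' z : List α} (h' : x' ≠ []) (h : 0 < P (x' ++ z)) : 0 < P x' := by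
  rcases List.eq_nil_or_concat x' with rfl | ⟨w, s, rfl⟩
  · exact absurd rfl h'
  rw [List.concat_eq_append] at h ⊢
  rcases z with _ | ⟨b, z⟩
  · simpa using h
  · have hx : (w ++ [s]) ++ b :: z = w ++ s :: (b :: z) := by simp
    rw [hx, hr w (b :: z) s] at h
    rw [pos_iff_ne_zero] at h ⊢
    exact (mul_ne_zero_iff.mp h).1

lemma exists_pos_of_setP_pos {L : Set (List α)} (h : 0 < PA.setP P L) :
    ∃ x ∈ L, 0 < P x := by
  by_contra hc
  push_neg at hc
  rw [PA.setP, pos_iff_ne_zero] at h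
  refine h (ENNReal.tsum_eq_zero.mpr fun x => ?_)
  have := hc x.1 x.2.1
  exact le_antisymm this zero_le

lemma setP_pos_of_exists
    (hr : ∀ (x y : List α) (s : α), P (x ++ s :: y) = P (x ++ [s]) * P (s :: y))
    {L : Set (List α)} (hnil : [] ∉ L) {x : List α} (hx : x ∈ L) (hpos : 0 < P x) :
    0 < PA.setP P L := by
  suffices H : ∀ (k : ℕ) (x : List α), x ∈ L → 0 < P x → x.length ≤ k → 0 < PA.setP P L by
    exact H x.length x hx hpos le_rfl
  clear hx hpos x
  intro k
  induction k with
  | zero =>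
    intro x hx hpos hlen
    have : x = [] := List.length_eq_zero_iff.mp (Nat.le_zero.mp hlen)
    exact absurd (this ▸ hx) hnil
  | succ k ih =>
  intro x hx hpos hlen
  by_cases hmin : x ∈ PA.minPref L
  · calc (0 : ℝ≥0∞) < P x := hpos
      _ ≤ PA.setP P L := ENNReal.le_tsum (f := fun y : PA.minPref L => P y.1) ⟨x, hmin⟩
  · rw [PA.minPref, Set.mem_setOf_eq] at hmin
    push_neg at hmin
    obtain ⟨x', hpre, hne, hx'⟩ := hmin hx
    obtain ⟨z, rfl⟩ := hpre
    have hnil' : x' ≠ [] := fun h => hnil (h ▸ hx')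
    have hpos' : 0 < P x' := prefix_pos hr hnil' hpos
    have hlt : x'.length ≤ k := by
      rcases z with _ | ⟨b, z⟩
      · exact absurd (by simp) hne
      · have : x'.length < (x' ++ b :: z).length := by simp
        omega
    exact ih x' hx' hpos' hlt

end ProbAux

section Main

variable {α : Type*} [Fintype α] [DecidableEq α]

lemma exit_aux (P : List α → ℝ≥0∞) (hP : PA.IsTPF P) (S₁ : Finset α)
    (h0 : ∀ i j : {x // x ∈ PA.USet P S₁},
      0 ≤ (Matrix.of fun u v : {x // x ∈ PA.USet P S₁} => (P [u.1, v.1]).toReal) i j)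
    (hrow : ∀ i : {x // x ∈ PA.USet P S₁},
      ∑ j, (Matrix.of fun u v : {x // x ∈ PA.USet P S₁} => (P [u.1, v.1]).toReal) i j ≤ 1) :
    ∀ (w : List α) (t : α) (u : {x // x ∈ PA.USet P S₁}),
      (∀ c ∈ w, c ∈ S₁) → t ∈ PA.OutSet P S₁ → 0 < P (u.1 :: (w ++ [t])) →
      ∑ v, ((Matrix.of fun u v : {x // x ∈ PA.USet P S₁} => (P [u.1, v.1]).toReal)
          ^ (w.length + 1)) u v < 1 := by
  classical
  obtain ⟨hle, hsingle, hrowP, hrule⟩ := hP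
  set A : Matrix {x // x ∈ PA.USet P S₁} {x // x ∈ PA.USet P S₁} ℝ :=
    Matrix.of fun u v : {x // x ∈ PA.USet P S₁} => (P [u.1, v.1]).toReal with hA
  have hfin : ∀ s t : α, P [s, t] ≠ ∞ := fun s t =>
    ne_top_of_le_ne_top ENNReal.one_ne_top (hle _)
  intro w
  induction w with
  | nil =>
    intro t u _ ht hpos
    have htS : t ∉ S₁ := by
      have h' := ht
      simp only [PA.OutSet, Finset.mem_filter] at h'
      exact h'.2.1
    have htU : t ∉ PA.USet P S₁ := by
      intro h
      simp only [PA.USet, Finset.mem_filter] at h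
      exact htS h.2.1
    have hTsum : (∑ v ∈ PA.USet P S₁, P [u.1, v]) + P [u.1, t] ≤ 1 := by
      have : ∑ v ∈ insert t (PA.USet P S₁), P [u.1, v] ≤ ∑ v : α, P [u.1, v] :=
        Finset.sum_le_sum_of_subset (Finset.subset_univ _)
      rw [Finset.sum_insert htU] at this
      calc (∑ v ∈ PA.USet P S₁, P [u.1, v]) + P [u.1, t]
          = P [u.1, t] + ∑ v ∈ PA.USet P S₁, P [u.1, v] := by ring
        _ ≤ ∑ v : α, P [u.1, v] := this
        _ ≤ 1 := hrowP u.1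
    have hTne : (∑ v ∈ PA.USet P S₁, P [u.1, v]) ≠ ∞ :=
      ne_top_of_le_ne_top ENNReal.one_ne_top (le_trans le_self_add hTsum)
    have hT1 : (∑ v ∈ PA.USet P S₁, P [u.1, v]) < 1 := by
      have hlt : (∑ v ∈ PA.USet P S₁, P [u.1, v])
          < (∑ v ∈ PA.USet P S₁, P [u.1, v]) + P [u.1, t] :=
        ENNReal.lt_add_right hTne (pos_iff_ne_zero.mp hpos)
      exact lt_of_lt_of_le hlt hTsum
    simp only [List.length_nil, zero_add, pow_one]
    have hcast : ∑ v : {x // x ∈ PA.USet P S₁}, A u v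
        = (∑ v ∈ PA.USet P S₁, P [u.1, v]).toReal := by
      rw [ENNReal.toReal_sum (fun v _ => hfin u.1 v)]
      rw [← Finset.sum_coe_sort (PA.USet P S₁) (fun v => (P [u.1, v]).toReal)]
      rfl
    rw [hcast, show (1 : ℝ) = (1 : ℝ≥0∞).toReal from ENNReal.toReal_one.symm]
    exact (ENNReal.toReal_lt_toReal hTne ENNReal.one_ne_top).mpr hT1
  | cons s w' ih =>
    intro t u hw ht hpos
    have hsS : s ∈ S₁ := hw s (by simp)
    have hsplit : P (u.1 :: (s :: w' ++ [t]))
        = P [u.1, s] * P (s :: (w' ++ [t])) := by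
      have := hrule [u.1] (w' ++ [t]) s
      simpa using this
    rw [hsplit, pos_iff_ne_zero, mul_ne_zero_iff] at hpos
    obtain ⟨hpos1, hpos2⟩ := hpos
    have hsU : s ∈ PA.USet P S₁ := by
      simp only [PA.USet, Finset.mem_filter]
      refine ⟨Finset.mem_univ s, hsS, ?_⟩
      refine setP_pos_of_exists hrule ?_
        (L := {x | ∃ (w'' : List α) (t' : α),
          x = s :: (w'' ++ [t']) ∧ (∀ c ∈ w'', c ∈ S₁) ∧ t' ∈ PA.OutSet P S₁})
        (x := s :: (w' ++ [t])) ?_ (pos_iff_ne_zero.mpr hpos2)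
      · rintro ⟨w'', t', h, -⟩
        exact List.cons_ne_nil _ _ h.symm
      · exact ⟨w', t, rfl, fun c hc => hw c (by simp [hc]), ht⟩
    set v₀ : {x // x ∈ PA.USet P S₁} := ⟨s, hsU⟩ with hv₀
    have hApos : 0 < A u v₀ :=
      ENNReal.toReal_pos hpos1 (hfin u.1 s)
    have hIH : ∑ v, (A ^ (w'.length + 1)) v₀ v < 1 :=
      ih t v₀ (fun c hc => hw c (by simp [hc])) ht (pos_iff_ne_zero.mpr hpos2)
    have := rowsum_step A h0 hrow hIH hApos
    simpa using this

end Main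

end PAex

open scoped ENNReal in
/-- `1 − P₂(𝒰)` is invertible with inverse `Σ_{i=0}^∞ P₂(𝒰)^i`. -/
theorem one_sub_P2U_invertible {α : Type*} [Fintype α] [DecidableEq α]
    (P : List α → ℝ≥0∞) (hP : PA.IsTPF P) (a : α)
    (S₁ : Finset α) (hS₁ : S₁ ⊂ Finset.univ)
    (hU : (PA.USet P S₁).Nonempty) (hO : (PA.OutSet P S₁).Nonempty) :
    IsUnit (1 - Matrix.of fun u v : {x // x ∈ PA.USet P S₁} => (P [u.1, v.1]).toReal) ∧
    HasSum (fun i : ℕ =>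
        (Matrix.of fun u v : {x // x ∈ PA.USet P S₁} => (P [u.1, v.1]).toReal) ^ i)
      (1 - Matrix.of fun u v : {x // x ∈ PA.USet P S₁} => (P [u.1, v.1]).toReal)⁻¹ := by
  classical
  haveI : Nonempty {x // x ∈ PA.USet P S₁} := ⟨⟨hU.choose, hU.choose_spec⟩⟩
  set A : Matrix {x // x ∈ PA.USet P S₁} {x // x ∈ PA.USet P S₁} ℝ :=
    Matrix.of fun u v : {x // x ∈ PA.USet P S₁} => (P [u.1, v.1]).toReal with hA
  obtain ⟨hle, hsingle, hrowP, hrule⟩ := id hP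
  have hfin : ∀ s t : α, P [s, t] ≠ ∞ := fun s t =>
    ne_top_of_le_ne_top ENNReal.one_ne_top (hle _)
  have h0 : ∀ i j, 0 ≤ A i j := fun i j => ENNReal.toReal_nonneg
  have hrow : ∀ i, ∑ j, A i j ≤ 1 := by
    intro i
    have hcast : ∑ v : {x // x ∈ PA.USet P S₁}, A i v
        = (∑ v ∈ PA.USet P S₁, P [i.1, v]).toReal := by
      rw [ENNReal.toReal_sum (fun v _ => hfin i.1 v)]
      rw [← Finset.sum_coe_sort (PA.USet P S₁) (fun v => (P [i.1, v]).toReal)]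
      rfl
    rw [hcast]
    have hsum : (∑ v ∈ PA.USet P S₁, P [i.1, v]) ≤ 1 :=
      le_trans (Finset.sum_le_sum_of_subset (Finset.subset_univ _)) (hrowP i.1)
    calc (∑ v ∈ PA.USet P S₁, P [i.1, v]).toReal ≤ (1 : ℝ≥0∞).toReal :=
          ENNReal.toReal_mono ENNReal.one_ne_top hsum
      _ = 1 := ENNReal.toReal_one
  have hexit : ∀ u, ∃ k, ∑ v, (A ^ k) u v < 1 := by
    intro u
    have hu := u.2
    simp only [PA.USet, Finset.mem_filter] at hu
    obtain ⟨x, hxL, hxpos⟩ := PAex.exists_pos_of_setP_pos hu.2.2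
    obtain ⟨w, t, rfl, hwS, ht⟩ := hxL
    exact ⟨w.length + 1, PAex.exit_aux P hP S₁ h0 hrow w t u hwS ht hxpos⟩
  exact PAex.neumann A h0 hrow hexit
end

section
/- Let M = (P, a) be a substochastic DTMC on finite S, S₁ ⊊ S. With ℐ := S₁∖(S₁)₀^M, 𝒪 := {t ∈ S∖S₁ | P(S₁t) > 0}, 𝒰 := {r ∈ S₁ | P(rS₁*𝒪) > 0}, 𝒰₁ := {r ∈ S₁ | P(r𝒪) > 0}, suppose ℐ∩𝒰 and 𝒪 are nonempty, and let s ∈ ℐ∩𝒰, t ∈ 𝒪. Let Q ∈ ℝ^{𝒰×𝒰₁} be the unique solution of (1 − P₂(𝒰))·Q = 1(𝒰,𝒰₁). Then the abstracted transition probability satisfies P_{S₁}^a(st) = P(sS₁*t) = Q(s,𝒰₁)·P₂(𝒰₁,t), i.e., the local reachability probability from s to t through S₁ is obtained by solving the linear system. -/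
open scoped ENNReal

namespace PAProof

set_option linter.unusedSectionVars false

open PA

variable {α : Type*}

lemma tsum_sum_type {β γ : Type*} (f : β ⊕ γ → ℝ≥0∞) :
    ∑' x, f x = (∑' b, f (Sum.inl b)) + ∑' c, f (Sum.inr c) := by
  rw [← Summable.tsum_add_tsum_compl (s := Set.range (Sum.inl : β → β ⊕ γ))
    ENNReal.summable ENNReal.summable]
  congr 1
  · exact ((Equiv.ofInjective _ (Sum.inl_injective (α := β) (β := γ))).tsum_eq
      (fun x : Set.range (Sum.inl : β → β ⊕ γ) => f x.1)).symm
  · rw [Set.compl_range_inl]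
    exact ((Equiv.ofInjective _ (Sum.inr_injective (α := β) (β := γ))).tsum_eq
      (fun x : Set.range (Sum.inr : γ → β ⊕ γ) => f x.1)).symm

section Contract

variable [DecidableEq α] {K : Finset α}

lemma contractAux_true_append {w : List α} (hw : ∀ c ∈ w, c ∈ K) (l : List α) :
    contractAux K true (w ++ l) = contractAux K true l := by
  induction w with
  | nil => rfl
  | cons c w ih =>
    have hc : c ∈ K := hw c (List.mem_cons_self)
    simp only [List.cons_append, contractAux, if_pos hc, if_pos rfl]
    exact ih (fun d hd => hw d (List.mem_cons_of_mem _ hd))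

lemma contract_word {r t : α} (hr : r ∈ K) (ht : t ∉ K) {w : List α}
    (hw : ∀ c ∈ w, c ∈ K) : contract K (r :: (w ++ [t])) = [r, t] := by
  unfold contract
  simp only [contractAux, if_pos hr]
  rw [contractAux_true_append hw]
  simp [contractAux, ht]

lemma contractAux_ne_nil {x : List α} (hx : x ≠ []) :
    contractAux K false x ≠ [] := by
  cases x with
  | nil => exact absurd rfl hx
  | cons c y =>
    by_cases hc : c ∈ K <;> simp [contractAux, hc]

lemma contractAux_true_single {t : α} (ht : t ∉ K) :
    ∀ {x : List α}, contractAux K true x = [t] →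
      ∃ w, x = w ++ [t] ∧ ∀ c ∈ w, c ∈ K := by
  intro x
  induction x with
  | nil => intro h; simp [contractAux] at h
  | cons c y ih =>
    intro h
    by_cases hc : c ∈ K
    · have h' : contractAux K true y = [t] := by
        simpa [contractAux, hc] using h
      obtain ⟨w, rfl, hw⟩ := ih h'
      refine ⟨c :: w, rfl, ?_⟩
      intro d hd
      rcases List.mem_cons.mp hd with rfl | hd
      · exact hc
      · exact hw d hd
    · have h' : c :: contractAux K false y = [t] := by
        simpa [contractAux, hc] using h
      have hct : c = t := (List.cons.injEq _ _ _ _ ▸ h').1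
      have hy : contractAux K false y = [] := (List.cons.injEq _ _ _ _ ▸ h').2
      have : y = [] := by
        by_contra hne
        exact contractAux_ne_nil hne hy
      subst this; subst hct
      exact ⟨[], rfl, by simp⟩

lemma contract_pair {r t : α} (hr : r ∈ K) (ht : t ∉ K) {x : List α}
    (h : contract K x = [r, t]) :
    ∃ w, x = r :: (w ++ [t]) ∧ ∀ c ∈ w, c ∈ K := by
  cases x with
  | nil => simp [contract, contractAux] at h
  | cons c y =>
    by_cases hc : c ∈ K
    · have h' : c :: contractAux K true y = [r, t] := by
        simpa [contract, contractAux, hc] using h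
      have hcr : c = r := (List.cons.injEq _ _ _ _ ▸ h').1
      have hy : contractAux K true y = [t] := (List.cons.injEq _ _ _ _ ▸ h').2
      obtain ⟨w, rfl, hw⟩ := contractAux_true_single ht hy
      exact ⟨w, by rw [hcr], hw⟩
    · have h' : c :: contractAux K false y = [r, t] := by
        simpa [contract, contractAux, hc] using h
      have hcr : c = r := (List.cons.injEq _ _ _ _ ▸ h').1
      exact absurd (hcr ▸ hr) hc

end Contract

section Words

variable [DecidableEq α] {S₁ : Finset α}

lemma append_single_eq {t₁ t' : α} (ht₁ : t₁ ∉ S₁) :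
    ∀ {w₁ w u : List α}, (∀ c ∈ w, c ∈ S₁) → w₁ ++ t₁ :: u = w ++ [t'] →
      w₁ = w ∧ t₁ = t' ∧ u = [] := by
  intro w₁
  induction w₁ with
  | nil =>
    intro w u hw h
    cases w with
    | nil =>
      simp only [List.nil_append] at h
      obtain ⟨h1, h2⟩ := List.cons.injEq _ _ _ _ ▸ h
      exact ⟨rfl, h1, h2⟩
    | cons c w' =>
      simp only [List.nil_append, List.cons_append] at h
      have : t₁ = c := (List.cons.injEq _ _ _ _ ▸ h).1
      exact absurd (this ▸ hw c (List.mem_cons_self)) ht₁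
  | cons d w₁' ih =>
    intro w u hw h
    cases w with
    | nil =>
      simp only [List.cons_append, List.nil_append] at h
      have h2 := (List.cons.injEq _ _ _ _ ▸ h).2
      exact absurd h2 (by simp)
    | cons c w' =>
      simp only [List.cons_append] at h
      have h1 : d = c := (List.cons.injEq _ _ _ _ ▸ h).1
      have h2 : w₁' ++ t₁ :: u = w' ++ [t'] := (List.cons.injEq _ _ _ _ ▸ h).2
      obtain ⟨ha, hb, hc⟩ := ih (fun x hx => hw x (List.mem_cons_of_mem _ hx)) h2
      exact ⟨by rw [h1, ha], hb, hc⟩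

/-- The set of words `r w t` with `w ⊆ S₁`. -/
def Rset (S₁ : Finset α) (t r : α) : Set (List α) :=
  {x | ∃ w, x = r :: (w ++ [t]) ∧ ∀ c ∈ w, c ∈ S₁}

lemma minPref_Rset {t : α} (ht : t ∉ S₁) (r : α) :
    minPref (Rset S₁ t r) = Rset S₁ t r := by
  ext x
  refine ⟨fun h => h.1, fun hx => ⟨hx, ?_⟩⟩
  rintro x' hpre hne ⟨w₁, rfl, hw₁⟩
  obtain ⟨w, hxw, hw⟩ := hx
  obtain ⟨u, hu⟩ := hpre
  rw [hxw] at hu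
  have h : w₁ ++ t :: u = w ++ [t] := by
    have := (List.cons.injEq _ _ _ _ ▸ hu).2
    simpa using this
  obtain ⟨h1, -, -⟩ := append_single_eq ht hw h
  exact hne (by rw [hxw, h1])

end Words

section Prob

variable [Fintype α] [DecidableEq α] {P : List α → ℝ≥0∞}
  {S₁ : Finset α} {t : α}

lemma P_cons (hP : PA.IsTPF P) (u c : α) (l : List α) : P (u :: c :: l) = P [u, c] * P (c :: l) := by
  have := hP.2.2.2 [u] l c
  simpa using this

lemma P_ne_top (hP : PA.IsTPF P) (x : List α) : P x ≠ ⊤ :=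
  fun h => by simpa [h] using hP.1 x

lemma row_sum_le_one (hP : PA.IsTPF P) (u : α) (s : Finset α) : ∑ v ∈ s, P [u, v] ≤ 1 :=
  le_trans (Finset.sum_le_sum_of_subset (Finset.subset_univ s)) (hP.2.2.1 u)

/-- Sum over all `S₁`-words of `P (r w t)`. -/
noncomputable def Fv (P : List α → ℝ≥0∞) (S₁ : Finset α) (t r : α) : ℝ≥0∞ :=
  ∑' w : {w : List α // ∀ c ∈ w, c ∈ S₁}, P (r :: (w.1 ++ [t]))

lemma setP_Rset (ht : t ∉ S₁) (r : α) : setP P (Rset S₁ t r) = Fv P S₁ t r := by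
  rw [setP, minPref_Rset ht]
  have hbij : Function.Bijective
      (fun w : {w : List α // ∀ c ∈ w, c ∈ S₁} =>
        (⟨r :: (w.1 ++ [t]), ⟨w.1, rfl, w.2⟩⟩ : Rset S₁ t r)) := by
    constructor
    · intro w w' hww
      have h1 : r :: (w.1 ++ [t]) = r :: (w'.1 ++ [t]) := congrArg Subtype.val hww
      have h2 : w.1 ++ [t] = w'.1 ++ [t] := (List.cons.injEq _ _ _ _ ▸ h1).2
      exact Subtype.ext (by simpa using h2)
    · rintro ⟨x, w, rfl, hw⟩
      exact ⟨⟨w, hw⟩, rfl⟩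
  exact ((Equiv.ofBijective _ hbij).tsum_eq (fun x : Rset S₁ t r => P x.1)).symm

/-- Splitting a sum over `S₁`-words by the first letter. -/
lemma tsum_SW (g : List α → ℝ≥0∞) :
    ∑' w : {w : List α // ∀ c ∈ w, c ∈ S₁}, g w.1
      = g [] + ∑' c : {c : α // c ∈ S₁},
          ∑' w : {w : List α // ∀ c ∈ w, c ∈ S₁}, g (c.1 :: w.1) := by
  classical
  have hbij : Function.Bijective
      (fun x : Unit ⊕ ({c : α // c ∈ S₁} × {w : List α // ∀ c ∈ w, c ∈ S₁}) =>
        (Sum.elim (fun _ => (⟨[], by simp⟩ : {w : List α // ∀ c ∈ w, c ∈ S₁}))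
          (fun p => ⟨p.1.1 :: p.2.1, by
            intro d hd
            rcases List.mem_cons.mp hd with rfl | hd
            · exact p.1.2
            · exact p.2.2 d hd⟩) x)) := by
    constructor
    · rintro (⟨⟩ | ⟨c, w⟩) (⟨⟩ | ⟨c', w'⟩) h <;>
        simp only [Sum.elim_inl, Sum.elim_inr, Subtype.mk.injEq] at h
      · rfl
      · exact absurd h (by simp)
      · exact absurd h (by simp)
      · simp only [List.cons.injEq] at h
        simp only [Prod.mk.injEq, Sum.inr.injEq]
        exact ⟨Subtype.ext h.1, Subtype.ext h.2⟩
    · rintro ⟨(_ | ⟨c, l⟩), hw⟩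
      · exact ⟨Sum.inl (), rfl⟩
      · exact ⟨Sum.inr ⟨⟨c, hw c (List.mem_cons_self)⟩,
          ⟨l, fun d hd => hw d (List.mem_cons_of_mem _ hd)⟩⟩, rfl⟩
  rw [← (Equiv.ofBijective _ hbij).tsum_eq
    (fun w : {w : List α // ∀ c ∈ w, c ∈ S₁} => g w.1), tsum_sum_type]
  congr 1
  · exact tsum_eq_single () (by intro b hb; exact absurd rfl hb)
  · exact ENNReal.tsum_prod (f := fun (c : {c : α // c ∈ S₁}) (w : {w : List α // ∀ c ∈ w, c ∈ S₁}) => g (c.1 :: w.1))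

lemma Fv_rec (hP : PA.IsTPF P) (ht : t ∉ S₁) (r : α) :
    Fv P S₁ t r = P [r, t] + ∑ c ∈ S₁, P [r, c] * Fv P S₁ t c := by
  rw [Fv, tsum_SW (g := fun l => P (r :: (l ++ [t])))]
  congr 1
  calc ∑' c : {c : α // c ∈ S₁}, ∑' w : {w : List α // ∀ c ∈ w, c ∈ S₁},
        P (r :: (c.1 :: w.1 ++ [t]))
      = ∑' c : {c : α // c ∈ S₁}, P [r, c.1] * Fv P S₁ t c.1 := by
        refine tsum_congr fun c => ?_
        rw [Fv, ← ENNReal.tsum_mul_left]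
        exact tsum_congr fun w => P_cons hP r c.1 (w.1 ++ [t])
    _ = ∑ c ∈ S₁, P [r, c] * Fv P S₁ t c :=
        Finset.tsum_subtype S₁ (fun c => P [r, c] * Fv P S₁ t c)

/-- truncated version of `Fv`. -/
noncomputable def Gv (P : List α → ℝ≥0∞) (S₁ : Finset α) (t : α) (n : ℕ) (r : α) : ℝ≥0∞ :=
  ∑' w : {w : List α // ∀ c ∈ w, c ∈ S₁},
    if w.1.length ≤ n then P (r :: (w.1 ++ [t])) else 0

lemma Gv_zero (r : α) : Gv P S₁ t 0 r = P [r, t] := by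
  rw [Gv, tsum_SW (g := fun l => if l.length ≤ 0 then P (r :: (l ++ [t])) else 0)]
  simp

lemma Gv_succ (hP : PA.IsTPF P) (n : ℕ) (r : α) :
    Gv P S₁ t (n + 1) r = P [r, t] + ∑ c ∈ S₁, P [r, c] * Gv P S₁ t n c := by
  rw [Gv, tsum_SW (g := fun l => if l.length ≤ n + 1 then P (r :: (l ++ [t])) else 0)]
  congr 1
  calc ∑' c : {c : α // c ∈ S₁}, ∑' w : {w : List α // ∀ c ∈ w, c ∈ S₁},
        (if (c.1 :: w.1).length ≤ n + 1 then P (r :: (c.1 :: w.1 ++ [t])) else 0)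
      = ∑' c : {c : α // c ∈ S₁}, P [r, c.1] * Gv P S₁ t n c.1 := by
        refine tsum_congr fun c => ?_
        rw [Gv, ← ENNReal.tsum_mul_left]
        refine tsum_congr fun w => ?_
        simp only [List.cons_append]
        rw [P_cons hP r c.1 (w.1 ++ [t])]
        simp only [List.length_cons, Nat.add_le_add_iff_right, mul_ite, mul_zero]
    _ = ∑ c ∈ S₁, P [r, c] * Gv P S₁ t n c :=
        Finset.tsum_subtype S₁ (fun c => P [r, c] * Gv P S₁ t n c)

lemma Gv_le_one (hP : PA.IsTPF P) (ht : t ∉ S₁) : ∀ n r, Gv P S₁ t n r ≤ 1 := by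
  intro n
  induction n with
  | zero => intro r; rw [Gv_zero]; exact hP.1 _
  | succ n ih =>
    intro r
    rw [Gv_succ hP n r]
    calc P [r, t] + ∑ c ∈ S₁, P [r, c] * Gv P S₁ t n c
        ≤ P [r, t] + ∑ c ∈ S₁, P [r, c] * 1 := by
          gcongr with c hc
          exact ih c
      _ = ∑ v ∈ insert t S₁, P [r, v] := by
          rw [Finset.sum_insert ht]; simp
      _ ≤ 1 := row_sum_le_one hP r _

lemma Fv_le_one (hP : PA.IsTPF P) (ht : t ∉ S₁) (r : α) : Fv P S₁ t r ≤ 1 := by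
  rw [Fv, ENNReal.tsum_eq_iSup_sum]
  refine iSup_le fun Fs => ?_
  set n := Fs.sup (fun w => w.1.length) with hn
  calc ∑ w ∈ Fs, P (r :: (w.1 ++ [t]))
      = ∑ w ∈ Fs, (if w.1.length ≤ n then P (r :: (w.1 ++ [t])) else 0) :=
        Finset.sum_congr rfl fun w hw => by
          rw [if_pos (Finset.le_sup (f := fun w => w.1.length) hw)]
    _ ≤ Gv P S₁ t n r := Summable.sum_le_tsum Fs (fun _ _ => zero_le) ENNReal.summable
    _ ≤ 1 := Gv_le_one hP ht n r

lemma Fv_ne_top (hP : PA.IsTPF P) (ht : t ∉ S₁) (r : α) : Fv P S₁ t r ≠ ⊤ :=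
  fun h => by simpa [h] using Fv_le_one hP ht r

/-- The witness set used in the definition of `USet`. -/
def Bset (P : List α → ℝ≥0∞) (S₁ : Finset α) (r : α) : Set (List α) :=
  {x | ∃ (w : List α) (t : α),
      x = r :: (w ++ [t]) ∧ (∀ c ∈ w, c ∈ S₁) ∧ t ∈ OutSet P S₁}

lemma not_mem_of_mem_OutSet {t' : α} (h : t' ∈ OutSet P S₁) : t' ∉ S₁ := by
  simp only [OutSet, Finset.mem_filter] at h
  exact h.2.1

lemma minPref_Bset (r : α) : minPref (Bset P S₁ r) = Bset P S₁ r := by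
  ext x
  refine ⟨fun h => h.1, fun hx => ⟨hx, ?_⟩⟩
  rintro x' hpre hne ⟨w₁, t₁, rfl, hw₁, ht₁⟩
  obtain ⟨w, t', hxw, hw, ht'⟩ := hx
  obtain ⟨u, hu⟩ := hpre
  rw [hxw] at hu
  have h : w₁ ++ t₁ :: u = w ++ [t'] := by
    have := (List.cons.injEq _ _ _ _ ▸ hu).2
    simpa using this
  obtain ⟨h1, h2, -⟩ := append_single_eq (not_mem_of_mem_OutSet ht₁) hw h
  exact hne (by rw [hxw, h1, h2])

lemma setP_Bset (r : α) :
    setP P (Bset P S₁ r) = ∑' x : Bset P S₁ r, P x.1 := by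
  rw [setP, minPref_Bset]

lemma mem_USet_of_pos {c : α} (hc : c ∈ S₁) {w : List α} (hw : ∀ d ∈ w, d ∈ S₁)
    {t' : α} (ht' : t' ∈ OutSet P S₁) (hpos : 0 < P (c :: (w ++ [t']))) :
    c ∈ USet P S₁ := by
  simp only [USet, Finset.mem_filter]
  refine ⟨Finset.mem_univ _, hc, ?_⟩
  have hle : P (c :: (w ++ [t'])) ≤ setP P (Bset P S₁ c) := by
    rw [setP_Bset]
    exact ENNReal.le_tsum (⟨c :: (w ++ [t']), w, t', rfl, hw, ht'⟩ : Bset P S₁ c)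
  exact lt_of_lt_of_le hpos hle

lemma exists_witness {u : α} (hu : u ∈ USet P S₁) :
    ∃ (w : List α) (t' : α), (∀ c ∈ w, c ∈ S₁) ∧ t' ∈ OutSet P S₁ ∧
      0 < P (u :: (w ++ [t'])) := by
  simp only [USet, Finset.mem_filter] at hu
  have hpos : 0 < setP P (Bset P S₁ u) := hu.2.2
  rw [setP_Bset] at hpos
  by_contra hcon
  push_neg at hcon
  have : ∀ x : Bset P S₁ u, P x.1 = 0 := by
    rintro ⟨x, w, t', rfl, hw, ht'⟩
    exact le_antisymm (hcon w t' hw ht') zero_le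
  rw [ENNReal.tsum_eq_zero.mpr this] at hpos
  exact lt_irrefl 0 hpos

lemma Fv_eq_zero {r : α} (hr : r ∈ S₁) (hnr : r ∉ USet P S₁)
    (htO : t ∈ OutSet P S₁) : Fv P S₁ t r = 0 := by
  simp only [USet, Finset.mem_filter] at hnr
  push_neg at hnr
  have h0 : setP P (Bset P S₁ r) = 0 := by
    have := hnr (Finset.mem_univ _) hr
    simpa [Bset] using this
  rw [setP_Bset] at h0
  rw [Fv]
  refine ENNReal.tsum_eq_zero.mpr fun w => ?_
  exact ENNReal.tsum_eq_zero.mp h0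
    (⟨r :: (w.1 ++ [t]), w.1, t, rfl, w.2, htO⟩ : Bset P S₁ r)

lemma P_single_out_zero {u : α} (hu : u ∈ S₁) (hu1 : u ∉ U1Set P S₁)
    (htO : t ∈ OutSet P S₁) : P [u, t] = 0 := by
  simp only [U1Set, Finset.mem_filter] at hu1
  push_neg at hu1
  have h0 : ∑ t' ∈ OutSet P S₁, P [u, t'] = 0 := by
    have := hu1 (Finset.mem_univ _) hu
    simpa using this
  exact (Finset.sum_eq_zero_iff.mp h0) t htO

lemma mem_S₁_of_mem_USet {u : α} (hu : u ∈ USet P S₁) : u ∈ S₁ := by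
  simp only [USet, Finset.mem_filter] at hu
  exact hu.2.1

lemma rowsumA_le_one (hP : PA.IsTPF P) (u : α) :
    ∑ v : {x // x ∈ USet P S₁}, (P [u, v.1]).toReal ≤ 1 := by
  rw [Finset.sum_coe_sort (USet P S₁) (fun v => (P [u, v]).toReal)]
  rw [← ENNReal.toReal_sum (fun v _ => P_ne_top hP _)]
  have := ENNReal.toReal_mono (by norm_num) (row_sum_le_one hP u (USet P S₁))
  simpa using this

lemma rowsumA_le (hP : PA.IsTPF P) (u : α) {t' : α} (ht' : t' ∉ S₁) :
    ∑ v : {x // x ∈ USet P S₁}, (P [u, v.1]).toReal ≤ 1 - (P [u, t']).toReal := by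
  have hsub : t' ∉ USet P S₁ := fun h => ht' (mem_S₁_of_mem_USet h)
  have h1 : P [u, t'] + ∑ v ∈ USet P S₁, P [u, v] ≤ 1 :=
    le_trans (le_of_eq (Finset.sum_insert (f := fun v => P [u, v]) hsub).symm)
      (row_sum_le_one hP u _)
  have hs_ne : (∑ v ∈ USet P S₁, P [u, v]) ≠ ⊤ :=
    ENNReal.sum_ne_top.mpr fun v _ => P_ne_top hP _
  have h2 := ENNReal.toReal_mono (by norm_num) h1
  rw [ENNReal.toReal_add (P_ne_top hP _) hs_ne, ENNReal.toReal_sum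
    (fun v _ => P_ne_top hP _), ENNReal.toReal_one] at h2
  rw [Finset.sum_coe_sort (USet P S₁) (fun v => (P [u, v]).toReal)]
  linarith

lemma abs_row_bound (x : {r // r ∈ USet P S₁} → ℝ) (u : {r // r ∈ USet P S₁})
    (hx : x u = ∑ v : {r // r ∈ USet P S₁}, (P [u.1, v.1]).toReal * x v) :
    |x u| ≤ ∑ v : {r // r ∈ USet P S₁}, (P [u.1, v.1]).toReal * |x v| := by
  rw [hx]
  refine (Finset.abs_sum_le_sum_abs _ _).trans ?_
  refine Finset.sum_le_sum fun v _ => ?_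
  rw [abs_mul, abs_of_nonneg ENNReal.toReal_nonneg]

lemma inj_lemma (hP : PA.IsTPF P) (x : {r // r ∈ USet P S₁} → ℝ)
    (hx : ∀ u, x u = ∑ v : {r // r ∈ USet P S₁}, (P [u.1, v.1]).toReal * x v) :
    ∀ u, x u = 0 := by
  classical
  cases isEmpty_or_nonempty {r // r ∈ USet P S₁} with
  | inl hemp => intro u; exact (hemp.false u).elim
  | inr hne =>
    obtain ⟨u₀, -, hmax⟩ := Finset.exists_max_image Finset.univ (fun v => |x v|)
      Finset.univ_nonempty
    set m := |x u₀| with hm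
    have hm0 : 0 ≤ m := abs_nonneg _
    have hmax' : ∀ v, |x v| ≤ m := fun v => hmax v (Finset.mem_univ v)
    have key : ∀ (w : List α) (t' : α) (u : {r // r ∈ USet P S₁}),
        (∀ c ∈ w, c ∈ S₁) → t' ∈ OutSet P S₁ → 0 < P (u.1 :: (w ++ [t'])) →
        |x u| ≤ m * (1 - (P (u.1 :: (w ++ [t']))).toReal) := by
      intro w
      induction w with
      | nil =>
        intro t' u hw ht' hpos
        have h2 : ∑ v : {r // r ∈ USet P S₁}, (P [u.1, v.1]).toReal * |x v|
            ≤ (∑ v : {r // r ∈ USet P S₁}, (P [u.1, v.1]).toReal) * m := by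
          rw [Finset.sum_mul]
          exact Finset.sum_le_sum fun v _ =>
            mul_le_mul_of_nonneg_left (hmax' v) ENNReal.toReal_nonneg
        have h3 := rowsumA_le hP u.1 (not_mem_of_mem_OutSet ht')
        have h4 : |x u| ≤ (1 - (P [u.1, t']).toReal) * m :=
          le_trans (abs_row_bound x u (hx u))
            (le_trans h2 (mul_le_mul_of_nonneg_right h3 hm0))
        have heq : (u.1 :: (([] : List α) ++ [t'])) = [u.1, t'] := rfl
        rw [heq]
        linarith
      | cons c w' ih =>
        intro t' u hw ht' hpos
        have hc : c ∈ S₁ := hw c (List.mem_cons_self)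
        have hw' : ∀ d ∈ w', d ∈ S₁ := fun d hd => hw d (List.mem_cons_of_mem _ hd)
        have hfact : P (u.1 :: (c :: w' ++ [t'])) = P [u.1, c] * P (c :: (w' ++ [t'])) :=
          P_cons hP u.1 c (w' ++ [t'])
        have hpos2 : 0 < P (c :: (w' ++ [t'])) := by
          by_contra h0
          have hz : P (c :: (w' ++ [t'])) = 0 := le_antisymm (not_lt.mp h0) zero_le
          rw [hfact, hz, mul_zero] at hpos
          exact lt_irrefl 0 hpos
        have hcU : c ∈ USet P S₁ := mem_USet_of_pos hc hw' ht' hpos2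
        have hIH := ih t' ⟨c, hcU⟩ hw' ht' hpos2
        set q := (P (c :: (w' ++ [t']))).toReal with hq
        set aa := (P [u.1, c]).toReal with haa
        have ha0 : 0 ≤ aa := ENNReal.toReal_nonneg
        have hsplit : ∑ v : {r // r ∈ USet P S₁}, (P [u.1, v.1]).toReal * |x v|
            = aa * |x ⟨c, hcU⟩| + ∑ v ∈ Finset.univ.erase ⟨c, hcU⟩,
                (P [u.1, v.1]).toReal * |x v| :=
          (Finset.add_sum_erase Finset.univ
            (fun v : {r // r ∈ USet P S₁} => (P [u.1, v.1]).toReal * |x v|)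
            (Finset.mem_univ ⟨c, hcU⟩)).symm
        have hbound_tail : ∑ v ∈ Finset.univ.erase (⟨c, hcU⟩ : {r // r ∈ USet P S₁}),
            (P [u.1, v.1]).toReal * |x v|
            ≤ (∑ v ∈ Finset.univ.erase (⟨c, hcU⟩ : {r // r ∈ USet P S₁}),
                (P [u.1, v.1]).toReal) * m := by
          rw [Finset.sum_mul]
          exact Finset.sum_le_sum fun v _ =>
            mul_le_mul_of_nonneg_left (hmax' v) ENNReal.toReal_nonneg
        have hrow : aa + ∑ v ∈ Finset.univ.erase (⟨c, hcU⟩ : {r // r ∈ USet P S₁}),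
            (P [u.1, v.1]).toReal ≤ 1 := by
          rw [show aa = (fun v : {r // r ∈ USet P S₁} => (P [u.1, v.1]).toReal) ⟨c, hcU⟩
            from rfl, Finset.add_sum_erase Finset.univ
            (fun v : {r // r ∈ USet P S₁} => (P [u.1, v.1]).toReal) (Finset.mem_univ ⟨c, hcU⟩)]
          exact rowsumA_le_one hP u.1
        have htoReal : (P (u.1 :: (c :: w' ++ [t']))).toReal = aa * q := by
          rw [hfact, ENNReal.toReal_mul]
        rw [htoReal]
        have habs := abs_row_bound x u (hx u)
        have hprod1 : aa * |x ⟨c, hcU⟩| ≤ aa * (m * (1 - q)) :=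
          mul_le_mul_of_nonneg_left hIH ha0
        have hprod2 : (aa + ∑ v ∈ Finset.univ.erase (⟨c, hcU⟩ : {r // r ∈ USet P S₁}),
            (P [u.1, v.1]).toReal) * m ≤ 1 * m :=
          mul_le_mul_of_nonneg_right hrow hm0
        nlinarith [habs, hsplit, hbound_tail, hprod1, hprod2]
    obtain ⟨w, t', hw, ht', hpos⟩ := exists_witness u₀.2
    have hk := key w t' u₀ hw ht' hpos
    have hqpos : 0 < (P (u₀.1 :: (w ++ [t']))).toReal :=
      ENNReal.toReal_pos (ne_of_gt hpos) (P_ne_top hP _)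
    have hm_zero : m = 0 := by nlinarith [hk, hqpos, hm0]
    intro u
    have := hmax' u
    rw [hm_zero] at this
    exact abs_eq_zero.mp (le_antisymm this (abs_nonneg _))

lemma Fv_toReal_rec (hP : PA.IsTPF P) (htO : t ∈ OutSet P S₁) {u : α}
    (hu : u ∈ USet P S₁) :
    (Fv P S₁ t u).toReal = (P [u, t]).toReal +
      ∑ v : {x // x ∈ USet P S₁}, (P [u, v.1]).toReal * (Fv P S₁ t v.1).toReal := by
  have htS : t ∉ S₁ := not_mem_of_mem_OutSet htO
  have hUsub : USet P S₁ ⊆ S₁ := fun r hr => mem_S₁_of_mem_USet hr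
  have h1 : Fv P S₁ t u = P [u, t] + ∑ c ∈ USet P S₁, P [u, c] * Fv P S₁ t c := by
    rw [Fv_rec hP htS u]
    congr 1
    exact (Finset.sum_subset hUsub fun c _ hnc => by
      rw [Fv_eq_zero (by assumption) hnc htO, mul_zero]).symm
  have hs_ne : (∑ c ∈ USet P S₁, P [u, c] * Fv P S₁ t c) ≠ ⊤ :=
    ENNReal.sum_ne_top.mpr fun c _ =>
      ENNReal.mul_ne_top (P_ne_top hP _) (Fv_ne_top hP htS _)
  rw [h1, ENNReal.toReal_add (P_ne_top hP _) hs_ne,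
    ENNReal.toReal_sum (fun c _ => ENNReal.mul_ne_top (P_ne_top hP _) (Fv_ne_top hP htS _))]
  congr 1
  rw [Finset.sum_coe_sort (USet P S₁) (fun c => (P [u, c]).toReal * (Fv P S₁ t c).toReal)]
  exact Finset.sum_congr rfl fun c _ => ENNReal.toReal_mul

end Prob

end PAProof

open scoped ENNReal in
/-- the abstracted probability `P_{S₁}^a(st) = P(sS₁*t)` is obtained by
solving the linear system `(1 − P₂(𝒰))·Q = 1(𝒰,𝒰₁)`. -/
theorem abstr_eq_linear_solution {α : Type*} [Fintype α] [DecidableEq α]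
    (P : List α → ℝ≥0∞) (hP : PA.IsTPF P) (a : α)
    (S₁ : Finset α) (hS₁ : S₁ ⊂ Finset.univ)
    (s t : α) (hsI : s ∈ S₁ ∧ s ∉ PA.interior P a S₁) (hsU : s ∈ PA.USet P S₁)
    (ht : t ∈ PA.OutSet P S₁)
    (Q : Matrix {x // x ∈ PA.USet P S₁} {x // x ∈ PA.U1Set P S₁} ℝ)
    (hQ : (1 - Matrix.of fun u v : {x // x ∈ PA.USet P S₁} => (P [u.1, v.1]).toReal) * Q
        = Matrix.of fun (u : {x // x ∈ PA.USet P S₁}) (v : {x // x ∈ PA.U1Set P S₁}) =>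
            if (u : α) = (v : α) then (1 : ℝ) else 0) :
    PA.abstr P a S₁ [s, t]
        = PA.setP P {x | ∃ w : List α, x = s :: (w ++ [t]) ∧ ∀ c ∈ w, c ∈ S₁} ∧
    (PA.abstr P a S₁ [s, t]).toReal
        = ∑ r : {x // x ∈ PA.U1Set P S₁}, Q ⟨s, hsU⟩ r * (P [r.1, t]).toReal := by
  classical
  have htS : t ∉ S₁ := PAProof.not_mem_of_mem_OutSet ht
  -- Part 1: the abstraction equals the local reachability mass
  have hpre : PA.preim S₁ [s, t] = PAProof.Rset S₁ t s := by
    ext x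
    constructor
    · intro hx
      exact PAProof.contract_pair hsI.1 htS hx
    · rintro ⟨w, rfl, hw⟩
      exact PAProof.contract_word hsI.1 htS hw
  have hcond : ¬(2 ≤ ([s, t] : List α).length ∧
      ∃ c ∈ ([s, t] : List α), c ∈ PA.interior P a S₁) := by
    rintro ⟨-, c, hc, hcint⟩
    rcases List.mem_cons.mp hc with rfl | hc
    · exact hsI.2 hcint
    · rcases List.mem_singleton.mp (by simpa using hc) with rfl
      exact htS hcint.1
  have habs : PA.abstr P a S₁ [s, t] = PA.setP P (PAProof.Rset S₁ t s) := by
    rw [PA.abstr]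
    rw [if_neg (by norm_num), if_neg hcond, hpre]
  refine ⟨habs, ?_⟩
  -- Part 2: the linear system
  have hF := fun (u : {x // x ∈ PA.USet P S₁}) =>
    PAProof.Fv_toReal_rec hP ht u.2
  -- the vector built from Q
  set y : {x // x ∈ PA.USet P S₁} → ℝ :=
    fun u => ∑ v : {x // x ∈ PA.U1Set P S₁}, Q u v * (P [v.1, t]).toReal with hy
  have hQ' : ∀ (u : {x // x ∈ PA.USet P S₁}) (v : {x // x ∈ PA.U1Set P S₁}),
      Q u v = (if u.1 = v.1 then (1 : ℝ) else 0) +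
        ∑ k : {x // x ∈ PA.USet P S₁}, (P [u.1, k.1]).toReal * Q k v := by
    intro u v
    have h := congrFun (congrFun hQ u) v
    rw [Matrix.mul_apply] at h
    simp only [Matrix.sub_apply, Matrix.one_apply, Matrix.of_apply, sub_mul, ite_mul,
      one_mul, zero_mul] at h
    rw [Finset.sum_sub_distrib] at h
    rw [Finset.sum_ite_eq Finset.univ u (fun k => Q k v)] at h
    simp only [Finset.mem_univ, if_true] at h
    linarith
  have hbase : ∀ u : {x // x ∈ PA.USet P S₁},
      (∑ v : {x // x ∈ PA.U1Set P S₁},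
        (if u.1 = v.1 then (1 : ℝ) else 0) * (P [v.1, t]).toReal) = (P [u.1, t]).toReal := by
    intro u
    have h1 : ∀ v : {x // x ∈ PA.U1Set P S₁},
        (if u.1 = v.1 then (1 : ℝ) else 0) * (P [v.1, t]).toReal
          = (if u.1 = v.1 then (P [v.1, t]).toReal else 0) := by
      intro v
      split_ifs <;> simp
    rw [Finset.sum_congr rfl fun v _ => h1 v]
    rw [Finset.sum_coe_sort (PA.U1Set P S₁)
      (fun v => if u.1 = v then (P [v, t]).toReal else 0)]
    rw [Finset.sum_ite_eq (PA.U1Set P S₁) u.1 (fun v => (P [v, t]).toReal)]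
    by_cases h : u.1 ∈ PA.U1Set P S₁
    · rw [if_pos h]
    · rw [if_neg h, PAProof.P_single_out_zero (PAProof.mem_S₁_of_mem_USet u.2) h ht]
      simp
  have h_y : ∀ u : {x // x ∈ PA.USet P S₁},
      y u = (P [u.1, t]).toReal +
        ∑ k : {x // x ∈ PA.USet P S₁}, (P [u.1, k.1]).toReal * y k := by
    intro u
    calc y u = ∑ v : {x // x ∈ PA.U1Set P S₁},
        ((if u.1 = v.1 then (1 : ℝ) else 0) +
          ∑ k : {x // x ∈ PA.USet P S₁}, (P [u.1, k.1]).toReal * Q k v)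
          * (P [v.1, t]).toReal := by
          exact Finset.sum_congr rfl fun v _ => by rw [← hQ' u v]
      _ = (∑ v : {x // x ∈ PA.U1Set P S₁},
            (if u.1 = v.1 then (1 : ℝ) else 0) * (P [v.1, t]).toReal)
          + ∑ v : {x // x ∈ PA.U1Set P S₁}, ∑ k : {x // x ∈ PA.USet P S₁},
            (P [u.1, k.1]).toReal * Q k v * (P [v.1, t]).toReal := by
          rw [← Finset.sum_add_distrib]
          refine Finset.sum_congr rfl fun v _ => ?_
          rw [add_mul, Finset.sum_mul]
      _ = (P [u.1, t]).toReal +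
          ∑ k : {x // x ∈ PA.USet P S₁}, (P [u.1, k.1]).toReal * y k := by
          rw [hbase u, Finset.sum_comm]
          congr 1
          refine Finset.sum_congr rfl fun k _ => ?_
          rw [hy, Finset.mul_sum]
          exact Finset.sum_congr rfl fun v _ => by ring
  -- difference vector
  set d : {x // x ∈ PA.USet P S₁} → ℝ :=
    fun u => y u - (PAProof.Fv P S₁ t u.1).toReal with hd
  have hdrec : ∀ u, d u = ∑ v : {x // x ∈ PA.USet P S₁}, (P [u.1, v.1]).toReal * d v := by
    intro u
    have h1 := h_y u
    have h2 := hF u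
    have h3 : ∑ v : {x // x ∈ PA.USet P S₁}, (P [u.1, v.1]).toReal * d v
        = (∑ v : {x // x ∈ PA.USet P S₁}, (P [u.1, v.1]).toReal * y v)
          - ∑ v : {x // x ∈ PA.USet P S₁},
              (P [u.1, v.1]).toReal * (PAProof.Fv P S₁ t v.1).toReal := by
      rw [← Finset.sum_sub_distrib]
      exact Finset.sum_congr rfl fun v _ => by rw [hd]; ring
    rw [h3, hd]
    simp only
    linarith
  have hzero := PAProof.inj_lemma hP d hdrec ⟨s, hsU⟩
  have hfin : (PAProof.Fv P S₁ t s).toReal = y ⟨s, hsU⟩ := by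
    have : y ⟨s, hsU⟩ - (PAProof.Fv P S₁ t s).toReal = 0 := hzero
    linarith
  rw [habs, PAProof.setP_Rset htS s, hfin, hy]
end
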